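/- Let n₁ and n₂ be positive integers and let S be a 3-sum (n₁,n₂)-free subset of [n₁]×[n₂]. If S contains a point (x₁,x₂) with 3x₁ ≤ n₁ and 3x₂ ≤ n₂, then |S| ≤ (7/9)·n₁·n₂ + max(n₁,n₂) (an inequality between real numbers). -/
import Mathlib


/-- For positive integers n₁, n₂ and a 3-sum (n₁,n₂)-free subset S of
[n₁]×[n₂] containing a point (x₁,x₂) with 3x₁ ≤ n₁ and 3x₂ ≤ n₂, we have
|S| ≤ (7/9)·n₁·n₂ + max(n₁,n₂). -/
theorem stmt_14 (n₁ n₂ : ℕ) (h₁ : 0 < n₁) (h₂ : 0 < n₂)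
    (S : Finset (ℤ × ℤ)) (hS : S ⊆ Finset.Icc (1, 1) ((n₁ : ℤ), (n₂ : ℤ)))
    (hfree : ¬ ∃ a : Fin 3 → ℤ × ℤ, (∀ i, a i ∈ S) ∧ ∑ i, a i = ((n₁ : ℤ), (n₂ : ℤ)))
    (x₁ x₂ : ℤ) (hx : (x₁, x₂) ∈ S) (hx₁ : 3 * x₁ ≤ (n₁ : ℤ)) (hx₂ : 3 * x₂ ≤ (n₂ : ℤ)) :
    (S.card : ℝ) ≤ (7 / 9 : ℝ) * (n₁ * n₂) + (max n₁ n₂ : ℕ) := by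
  have hxmem := hS hx
  simp only [Finset.mem_Icc, Prod.mk_le_mk] at hxmem
  obtain ⟨⟨ha1, ha2⟩, hb1, hb2⟩ := hxmem
  set c : ℤ × ℤ := ((n₁ : ℤ) - x₁, (n₂ : ℤ) - x₂) with hc
  have hpair : ∀ a ∈ S, ∀ b ∈ S, a + b ≠ c := by
    intro a ha b hb hab
    apply hfree
    refine ⟨![a, b, (x₁, x₂)], ?_, ?_⟩
    · intro i; fin_cases i <;> simpa
    · rw [Fin.sum_univ_three]
      simp only [Matrix.cons_val_zero, Matrix.cons_val_one, Matrix.head_cons,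
        Matrix.cons_val_two, Matrix.tail_cons]
      rw [hab, hc, Prod.mk_add_mk]
      simp [Prod.ext_iff]
  set B : Finset (ℤ × ℤ) := Finset.Icc (1, 1) ((n₁ : ℤ) - x₁ - 1, (n₂ : ℤ) - x₂ - 1) with hBdef
  have hBmem : ∀ p : ℤ × ℤ, p ∈ B ↔ 1 ≤ p.1 ∧ p.1 ≤ (n₁ : ℤ) - x₁ - 1 ∧ 1 ≤ p.2 ∧ p.2 ≤ (n₂ : ℤ) - x₂ - 1 := by
    intro p
    simp only [hBdef, Finset.mem_Icc, Prod.mk_le_mk, Prod.le_def]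
    tauto
  have hBmaps : ∀ p ∈ B, c - p ∈ B := by
    intro p hp
    rw [hBmem] at hp ⊢
    simp only [hc, Prod.fst_sub, Prod.snd_sub]
    omega
  set T : Finset (ℤ × ℤ) := S ∩ B with hT
  have hdisj : Disjoint (T.image (fun p => c - p)) T := by
    rw [Finset.disjoint_left]
    rintro q hq hq2
    obtain ⟨p, hp, rfl⟩ := Finset.mem_image.mp hq
    have hpS : p ∈ S := (Finset.mem_inter.mp hp).1
    have hqS : c - p ∈ S := (Finset.mem_inter.mp hq2).1
    exact hpair p hpS (c - p) hqS (by ring)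
  have hsubB : T.image (fun p => c - p) ∪ T ⊆ B := by
    intro q hq
    rcases Finset.mem_union.mp hq with hq | hq
    · obtain ⟨p, hp, rfl⟩ := Finset.mem_image.mp hq
      exact hBmaps p (Finset.mem_inter.mp hp).2
    · exact (Finset.mem_inter.mp hq).2
  have hinj : Set.InjOn (fun p => c - p) T := by
    intro a _ b _ hab
    simpa using sub_right_injective hab
  have hcard2 : 2 * T.card ≤ B.card := by
    have h1 := Finset.card_le_card hsubB
    rw [Finset.card_union_of_disjoint hdisj, Finset.card_image_of_injOn hinj] at h1
    omega
  have hsdiff : S \ B ⊆ Finset.Icc (1, 1) ((n₁ : ℤ), (n₂ : ℤ)) \ B := by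
    intro p hp
    rw [Finset.mem_sdiff] at hp ⊢
    exact ⟨hS hp.1, hp.2⟩
  have hBsub : B ⊆ Finset.Icc (1, 1) ((n₁ : ℤ), (n₂ : ℤ)) := by
    intro p hp
    rw [hBmem] at hp
    simp only [Finset.mem_Icc, Prod.mk_le_mk, Prod.le_def]
    omega
  have hScard : S.card ≤ (S \ B).card + T.card := by
    rw [hT]
    have := Finset.card_sdiff_add_card_inter S B
    omega
  have hsd : (S \ B).card ≤ (Finset.Icc ((1:ℤ), (1:ℤ)) ((n₁ : ℤ), (n₂ : ℤ))).card - B.card := by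
    calc (S \ B).card ≤ (Finset.Icc ((1:ℤ), (1:ℤ)) ((n₁ : ℤ), (n₂ : ℤ)) \ B).card :=
          Finset.card_le_card hsdiff
      _ = _ := Finset.card_sdiff_of_subset hBsub
  -- cardinalities
  have hn1 : (3:ℤ) ≤ n₁ := by omega
  have hn2 : (3:ℤ) ≤ n₂ := by omega
  have hboxcard : (Finset.Icc ((1:ℤ), (1:ℤ)) ((n₁ : ℤ), (n₂ : ℤ))).card = n₁ * n₂ := by
    rw [Finset.card_Icc_prod]
    simp [Int.card_Icc]
  have hA1 : (1:ℤ) ≤ (n₁ : ℤ) - x₁ - 1 := by omega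
  have hA2 : (1:ℤ) ≤ (n₂ : ℤ) - x₂ - 1 := by omega
  have hBcard : B.card = ((n₁ : ℤ) - x₁ - 1).toNat * ((n₂ : ℤ) - x₂ - 1).toNat := by
    rw [hBdef, Finset.card_Icc_prod]
    simp [Int.card_Icc]
  -- pass to reals
  set a : ℝ := (((n₁ : ℤ) - x₁ - 1 : ℤ) : ℝ) with hadef
  set b : ℝ := (((n₂ : ℤ) - x₂ - 1 : ℤ) : ℝ) with hbdef
  have e1 : ((((n₁:ℤ) - x₁ - 1).toNat : ℕ) : ℝ) = a := by
    rw [hadef, ← Int.cast_natCast, Int.toNat_of_nonneg (by omega)]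
  have e2 : ((((n₂:ℤ) - x₂ - 1).toNat : ℕ) : ℝ) = b := by
    rw [hbdef, ← Int.cast_natCast, Int.toNat_of_nonneg (by omega)]
  have hBcardR : (B.card : ℝ) = a * b := by
    rw [hBcard, Nat.cast_mul, e1, e2]
  have haR : 2 * (n₁ : ℝ) - 3 ≤ 3 * a := by
    have h : (2 * (n₁:ℤ) - 3 : ℤ) ≤ 3 * ((n₁:ℤ) - x₁ - 1) := by omega
    have h2 : ((2 * (n₁:ℤ) - 3 : ℤ) : ℝ) ≤ ((3 * ((n₁:ℤ) - x₁ - 1) : ℤ) : ℝ) := by exact_mod_cast h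
    push_cast at h2
    rw [hadef]; push_cast; linarith
  have hbR : 2 * (n₂ : ℝ) - 3 ≤ 3 * b := by
    have h : (2 * (n₂:ℤ) - 3 : ℤ) ≤ 3 * ((n₂:ℤ) - x₂ - 1) := by omega
    have h2 : ((2 * (n₂:ℤ) - 3 : ℤ) : ℝ) ≤ ((3 * ((n₂:ℤ) - x₂ - 1) : ℤ) : ℝ) := by exact_mod_cast h
    push_cast at h2
    rw [hbdef]; push_cast; linarith
  have haR1 : (1:ℝ) ≤ a := by rw [hadef]; exact_mod_cast hA1
  have hbR1 : (1:ℝ) ≤ b := by rw [hbdef]; exact_mod_cast hA2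
  -- combine counts in ℝ
  have hBle : B.card ≤ (Finset.Icc ((1:ℤ), (1:ℤ)) ((n₁ : ℤ), (n₂ : ℤ))).card :=
    Finset.card_le_card hBsub
  have hmain : 2 * S.card + B.card ≤ 2 * (n₁ * n₂) := by
    rw [← hboxcard]; omega
  have hmainR : 2 * (S.card : ℝ) + a * b ≤ 2 * ((n₁ : ℝ) * n₂) := by
    rw [← hBcardR]
    exact_mod_cast hmain
  have hmax1 : (n₁ : ℝ) ≤ (max n₁ n₂ : ℕ) := by exact_mod_cast Nat.le_max_left n₁ n₂
  have hmax2 : (n₂ : ℝ) ≤ (max n₁ n₂ : ℕ) := by exact_mod_cast Nat.le_max_right n₁ n₂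
  have hn1R : (3:ℝ) ≤ n₁ := by exact_mod_cast hn1
  have hn2R : (3:ℝ) ≤ n₂ := by exact_mod_cast hn2
  have hprod : (2 * (n₁:ℝ) - 3) * (2 * (n₂:ℝ) - 3) ≤ (3 * a) * (3 * b) :=
    mul_le_mul haR hbR (by linarith) (by linarith)
  nlinarith [hprod, hmainR, hmax1, hmax2]
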